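/- Suppose t : ℤ → ℝ is strictly positive and d ∈ ℝ satisfies d · t(k) = t(k+1) + t(k-1) for all k ∈ ℤ. Then d ≥ 2. -/

import Mathlib

theorem eigenvalue_bound_infinite_path (t : ℤ → ℝ) (ht : ∀ k, 0 < t k) (d : ℝ)
    (h : ∀ k : ℤ, d * t k = t (k + 1) + t (k - 1)) : 2 ≤ d := by
  by_contra hd
  push_neg at hd
  -- d > 0
  have hdpos : 0 < d := by
    have h0 := h 0
    norm_num at h0
    nlinarith [ht 0, ht 1, ht (-1)]
  set g : ℕ → ℝ := fun n => t ((n : ℤ) + 1) / t (n : ℤ) with hg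
  have hgpos : ∀ n, 0 < g n := fun n => div_pos (ht _) (ht _)
  set c : ℝ := 1 - d ^ 2 / 4 with hc
  clear_value c
  have hcpos : 0 < c := by
    rw [hc]
    nlinarith [mul_pos (sub_pos.mpr hd) (by linarith : (0:ℝ) < d + 2)]
  -- product recurrence: g n * g (n+1) = d * g n - 1
  have gmul : ∀ n : ℕ, g n * g (n + 1) = d * g n - 1 := by
    intro n
    have hk := h ((n : ℤ) + 1)
    have h1 : (n : ℤ) + 1 - 1 = (n : ℤ) := by ring
    rw [h1] at hk
    have htn := ht (n : ℤ)
    have htn1 := ht ((n : ℤ) + 1)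
    have hgn1 : g (n + 1) = t ((n : ℤ) + 1 + 1) / t ((n : ℤ) + 1) := by
      simp only [hg]
      push_cast
      ring_nf
    rw [hgn1]
    simp only [hg]
    field_simp
    linear_combination (-1 : ℝ) * hk
  set ε : ℝ := c / g 0 with hε
  clear_value ε
  have hεpos : 0 < ε := by rw [hε]; exact div_pos hcpos (hgpos 0)
  have hεg0 : ε * g 0 = c := by
    rw [hε, div_mul_cancel₀]
    exact (hgpos 0).ne'
  -- g n ≤ g 0 - n * ε
  have main : ∀ n : ℕ, g n ≤ g 0 - n * ε := by
    intro n
    induction n with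
    | zero => simp
    | succ n ih =>
      have hgn := hgpos n
      have hgn1 := hgpos (n + 1)
      have hle : g n ≤ g 0 := by
        have : (n : ℝ) * ε ≥ 0 := by positivity
        linarith
      have key : g (n + 1) ≤ g n - ε := by
        have hm := gmul n
        have h2 : ε * g n ≤ (g n - g (n + 1)) * g n := by
          nlinarith [hm, hc, hεg0, sq_nonneg (g n - d / 2), mul_nonneg (sub_nonneg.mpr hle) hεpos.le]
        have h3 : ε ≤ g n - g (n + 1) := le_of_mul_le_mul_right h2 hgn
        linarith
      push_cast
      linarith
  obtain ⟨n, hn⟩ := exists_nat_gt (g 0 / ε)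
  have : g 0 < n * ε := by
    rw [div_lt_iff₀ hεpos] at hn
    linarith
  have := main n
  have := hgpos n
  linarith
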